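/- Discrepancy between the MAR functional and the nonparametric functional (section 3.2 / Appendix B): assume π > 0 and Γ + (1−Γ)·H > 0 almost surely. Then almost everywhere on {π > 0}, M_MAR − μ = Γ·(1−Γ)·(1−H)·(M_R − M_S) / (1 − (1−Γ)·(1−H)); consequently, if μ and M_MAR are integrable, τ_a*(P) − τ_a(P) = E[ Γ·(1−Γ)·(1−H)·(M_R − M_S) / (1 − (1−Γ)·(1−H)) ], where τ_a*(P) := E[M_MAR] and τ_a(P) := E[μ]. -/

import Mathlib

open MeasureTheory

/-- the ambient measurable space of a measure -/
abbrev ambMS {Ω : Type*} {m : MeasurableSpace Ω} (_P : @Measure Ω m) : MeasurableSpace Ω := m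

/-- Discrepancy between the MAR functional and the nonparametric functional
(section 3.2 / Appendix B): if `π > 0` and `Γ + (1−Γ)H > 0` a.s., then a.e. on
`{π > 0}`, `M_MAR − μ = Γ(1−Γ)(1−H)(M_R − M_S)/(1 − (1−Γ)(1−H))`; consequently
`τ_a*(P) − τ_a(P) = E[Γ(1−Γ)(1−H)(M_R − M_S)/(1 − (1−Γ)(1−H))]`. -/
theorem MAR_discrepancy_formula
    {Ω : Type*} [MeasurableSpace Ω] (P : Measure Ω) [IsProbabilityMeasure P]
    {d : ℕ} (L : Ω → (Fin d → ℝ)) (A R S Y : Ω → ℝ)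
    (hL : Measurable L) (hA : Measurable A) (hR : Measurable R)
    (hS : Measurable S) (hY : Integrable Y P)
    (hA01 : ∀ ω, A ω = 0 ∨ A ω = 1)
    (hR01 : ∀ ω, R ω = 0 ∨ R ω = 1)
    (hS01 : ∀ ω, S ω = 0 ∨ S ω = 1)
    (hSR : ∀ ω, S ω * R ω = 0)
    (a : ℝ) (ha : a = 0 ∨ a = 1)
    (𝓛 : MeasurableSpace Ω) (h𝓛 : 𝓛 = MeasurableSpace.comap L inferInstance)
    (ind : Ω → ℝ) (hind : ind = fun ω => if A ω = a then (1:ℝ) else 0)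
    -- arm-a nuisance random variables
    (π Γ H M_R M_S M_MAR : Ω → ℝ)
    (hπ_meas : Measurable[𝓛] π) (hπ_int : Integrable π P)
    (hΓ_meas : Measurable[𝓛] Γ) (hΓ_int : Integrable Γ P)
    (hH_meas : Measurable[𝓛] H) (hH_int : Integrable H P)
    (hMR_meas : Measurable[𝓛] M_R) (hMR_int : Integrable M_R P)
    (hMS_meas : Measurable[𝓛] M_S) (hMS_int : Integrable M_S P)
    (hMMAR_meas : Measurable[𝓛] M_MAR) (hMMAR_int : Integrable M_MAR P)
    (hπ01 : ∀ ω, 0 ≤ π ω ∧ π ω ≤ 1)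
    (hΓ01 : ∀ ω, 0 ≤ Γ ω ∧ Γ ω ≤ 1)
    (hH01 : ∀ ω, 0 ≤ H ω ∧ H ω ≤ 1)
    -- characterizations
    (hπ : P[ind | 𝓛] =ᵐ[P] π)
    (hΓ : P[fun ω => ind ω * R ω | 𝓛] =ᵐ[P] fun ω => Γ ω * π ω)
    (hH : P[fun ω => ind ω * S ω | 𝓛]
      =ᵐ[P] fun ω => H ω * (P[fun ω' => ind ω' * (1 - R ω') | 𝓛]) ω)
    (hMR : P[fun ω => ind ω * R ω * Y ω | 𝓛] =ᵐ[P] fun ω => M_R ω * (Γ ω * π ω))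
    (hMS : P[fun ω => ind ω * S ω * Y ω | 𝓛]
      =ᵐ[P] fun ω => M_S ω * (H ω * ((1 - Γ ω) * π ω)))
    (hMMAR : P[fun ω => ind ω * (R ω + S ω) * Y ω | 𝓛]
      =ᵐ[P] fun ω => M_MAR ω * (P[fun ω' => ind ω' * (R ω' + S ω') | 𝓛]) ω)
    -- definition of μ, positivity and integrability
    (μ : Ω → ℝ) (hμdef : μ = fun ω => Γ ω * M_R ω + (1 - Γ ω) * M_S ω)
    (hπpos : ∀ᵐ ω ∂P, 0 < π ω)
    (hDpos : ∀ᵐ ω ∂P, 0 < Γ ω + (1 - Γ ω) * H ω)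
    (hμ_int : Integrable μ P) :
    (∀ᵐ ω ∂P, 0 < π ω →
        M_MAR ω - μ ω
          = Γ ω * (1 - Γ ω) * (1 - H ω) * (M_R ω - M_S ω)
            / (1 - (1 - Γ ω) * (1 - H ω)))
    ∧ ∫ ω, M_MAR ω ∂P - ∫ ω, μ ω ∂P
        = ∫ ω, Γ ω * (1 - Γ ω) * (1 - H ω) * (M_R ω - M_S ω)
            / (1 - (1 - Γ ω) * (1 - H ω)) ∂P := by
  subst hind hμdef
  -- basic measurability / integrability
  have hMA := hA (measurableSet_singleton a)
  set ind : Ω → ℝ := fun ω => if A ω = a then (1:ℝ) else 0 with hind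
  have hind_meas : AEStronglyMeasurable (m := ambMS P) ind P := by
    have hie : ind = (A ⁻¹' {a}).indicator (fun _ => (1:ℝ)) := by
      funext ω; by_cases h : A ω = a <;> simp [hind, Set.indicator, h]
    rw [hie]
    exact aestronglyMeasurable_const.indicator hMA
  have hind01 : ∀ ω, 0 ≤ ind ω ∧ ind ω ≤ 1 := by
    intro ω; by_cases h : A ω = a <;> simp [hind, h]
  have hR01' : ∀ ω, 0 ≤ R ω ∧ R ω ≤ 1 := by
    intro ω; rcases hR01 ω with h | h <;> simp [h]
  have hS01' : ∀ ω, 0 ≤ S ω ∧ S ω ≤ 1 := by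
    intro ω; rcases hS01 ω with h | h <;> simp [h]
  have hbdd : ∀ (f : Ω → ℝ), AEStronglyMeasurable (m := ambMS P) f P → (∀ ω, 0 ≤ f ω ∧ f ω ≤ 1) →
      Integrable f P := by
    intro f hf hb
    refine Integrable.mono' (integrable_const 1) hf ?_
    filter_upwards with ω
    rw [Real.norm_eq_abs, abs_le]
    exact ⟨by linarith [(hb ω).1], (hb ω).2⟩
  have h_i : Integrable ind P := hbdd _ hind_meas hind01
  have h_iR : Integrable (fun ω => ind ω * R ω) P :=
    hbdd _ (hind_meas.mul hR.aestronglyMeasurable) (fun ω => ⟨mul_nonneg (hind01 ω).1 (hR01' ω).1,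
      mul_le_one₀ (hind01 ω).2 (hR01' ω).1 (hR01' ω).2⟩)
  have h_iS : Integrable (fun ω => ind ω * S ω) P :=
    hbdd _ (hind_meas.mul hS.aestronglyMeasurable) (fun ω => ⟨mul_nonneg (hind01 ω).1 (hS01' ω).1,
      mul_le_one₀ (hind01 ω).2 (hS01' ω).1 (hS01' ω).2⟩)
  have h_iRY : Integrable (fun ω => ind ω * R ω * Y ω) P := by
    refine hY.bdd_mul (hind_meas.mul hR.aestronglyMeasurable) (c := 1) (Filter.Eventually.of_forall fun ω => ?_)
    rw [Real.norm_eq_abs, abs_le]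
    refine ⟨by nlinarith [(hind01 ω).1, (hR01' ω).1], ?_⟩
    exact mul_le_one₀ (hind01 ω).2 (hR01' ω).1 (hR01' ω).2
  have h_iSY : Integrable (fun ω => ind ω * S ω * Y ω) P := by
    refine hY.bdd_mul (hind_meas.mul hS.aestronglyMeasurable) (c := 1) (Filter.Eventually.of_forall fun ω => ?_)
    rw [Real.norm_eq_abs, abs_le]
    refine ⟨by nlinarith [(hind01 ω).1, (hS01' ω).1], ?_⟩
    exact mul_le_one₀ (hind01 ω).2 (hS01' ω).1 (hS01' ω).2
  -- conditional expectation linearity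
  have hfe1 : (fun ω => ind ω * (R ω + S ω) * Y ω)
      = (fun ω => ind ω * R ω * Y ω) + fun ω => ind ω * S ω * Y ω := by
    funext ω; simp only [Pi.add_apply]; ring
  have hcr : P[fun ω => ind ω * (R ω + S ω) * Y ω | 𝓛]
      =ᵐ[P] fun ω => (P[fun ω => ind ω * R ω * Y ω | 𝓛]) ω
        + (P[fun ω => ind ω * S ω * Y ω | 𝓛]) ω := by
    rw [hfe1]
    filter_upwards [condExp_add h_iRY h_iSY 𝓛] with ω h using h
  have hfe2 : (fun ω => ind ω * (R ω + S ω))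
      = (fun ω => ind ω * R ω) + fun ω => ind ω * S ω := by
    funext ω; simp only [Pi.add_apply]; ring
  have hcs : P[fun ω => ind ω * (R ω + S ω) | 𝓛]
      =ᵐ[P] fun ω => (P[fun ω => ind ω * R ω | 𝓛]) ω
        + (P[fun ω => ind ω * S ω | 𝓛]) ω := by
    rw [hfe2]
    filter_upwards [condExp_add h_iR h_iS 𝓛] with ω h using h
  have hfe3 : (fun ω => ind ω * (1 - R ω)) = ind - fun ω => ind ω * R ω := by
    funext ω; simp only [Pi.sub_apply]; ring
  have hc1mR : P[fun ω => ind ω * (1 - R ω) | 𝓛]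
      =ᵐ[P] fun ω => π ω - Γ ω * π ω := by
    rw [hfe3]
    filter_upwards [condExp_sub h_i h_iR 𝓛, hπ, hΓ] with ω h h1 h2
    simp only [Pi.sub_apply] at h
    rw [h, h1, h2]
  -- the key pointwise identity
  have key : ∀ᵐ ω ∂P, M_MAR ω * (Γ ω * π ω + H ω * (π ω - Γ ω * π ω))
      = M_R ω * (Γ ω * π ω) + M_S ω * (H ω * ((1 - Γ ω) * π ω)) := by
    filter_upwards [hMMAR, hcr, hcs, hMR, hMS, hΓ, hH, hc1mR]
      with ω e1 e2 e3 e4 e5 e6 e7 e8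
    rw [e2, e4, e5, e3, e6, e7, e8] at e1
    linear_combination -e1
  have hpart1 : ∀ᵐ ω ∂P, 0 < π ω →
      M_MAR ω - (Γ ω * M_R ω + (1 - Γ ω) * M_S ω)
        = Γ ω * (1 - Γ ω) * (1 - H ω) * (M_R ω - M_S ω)
          / (1 - (1 - Γ ω) * (1 - H ω)) := by
    filter_upwards [key, hDpos] with ω k hD hp
    have hDne : 1 - (1 - Γ ω) * (1 - H ω) ≠ 0 := by nlinarith
    have hπne : π ω ≠ 0 := ne_of_gt hp
    have k2 : M_MAR ω * (Γ ω + H ω * (1 - Γ ω))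
        = M_R ω * Γ ω + M_S ω * (H ω * (1 - Γ ω)) := by
      apply mul_right_cancel₀ hπne
      linear_combination k
    rw [eq_div_iff hDne]
    linear_combination k2
  refine ⟨hpart1, ?_⟩
  have hae : (fun ω => M_MAR ω - (Γ ω * M_R ω + (1 - Γ ω) * M_S ω))
      =ᵐ[P] fun ω => Γ ω * (1 - Γ ω) * (1 - H ω) * (M_R ω - M_S ω)
        / (1 - (1 - Γ ω) * (1 - H ω)) := by
    filter_upwards [hpart1, hπpos] with ω h hp using h hp
  rw [← integral_sub hMMAR_int hμ_int, integral_congr_ae hae]
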